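/- Let μ > 0, β ∈ ℝ and f_max ≥ 0 be real numbers with discriminant D = β² − 4·μ·f_max = 0, and let y* = β/(2μ). Suppose y : ℝ → ℝ satisfies y'(t) = μ·y(t)² − β·y(t) + f_max for all t ≥ 0 and y(0) < y*. Then y is strictly increasing on [0, ∞), satisfies y(t) < y* for all t ≥ 0, and y(t) converges to y* as t → ∞. -/
import Mathlib

open Filter Real Set

/-- Riccati ODE, case D = 0 with initial value below the unique equilibrium y* = β/(2μ):
the solution is strictly increasing on [0,∞), stays below y*, and converges to y*. -/
theorem riccati_critical_below_equilibrium_increasing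
    (μ β fmax : ℝ) (hμ : 0 < μ) (hf : 0 ≤ fmax)
    (hD : β ^ 2 - 4 * μ * fmax = 0)
    (y : ℝ → ℝ)
    (hy : ∀ t ≥ (0 : ℝ), HasDerivAt y (μ * y t ^ 2 - β * y t + fmax) t)
    (h0 : y 0 < β / (2 * μ)) :
    StrictMonoOn y (Set.Ici (0 : ℝ)) ∧
      (∀ t ≥ (0 : ℝ), y t < β / (2 * μ)) ∧
      Tendsto y atTop (nhds (β / (2 * μ))) := by
  have hμ' : (2 : ℝ) * μ ≠ 0 := by positivity
  set A := β / (2 * μ) with hA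
  have hfm : fmax = β ^ 2 / (4 * μ) := by
    field_simp
    linarith [hD]
  have hsq : ∀ x : ℝ, μ * x ^ 2 - β * x + fmax = μ * (x - A) ^ 2 := by
    intro x
    rw [hfm, hA]
    field_simp
    ring
  set v : ℝ → ℝ := fun t => y t - A with hvdef
  have hv' : ∀ t ≥ (0 : ℝ), HasDerivAt v (μ * v t ^ 2) t := by
    intro t ht
    have h := (hy t ht).sub_const A
    rwa [hsq (y t)] at h
  have hv0 : v 0 < 0 := sub_neg.mpr h0
  have hcont : ∀ t ≥ (0 : ℝ), ContinuousAt v t := fun t ht => (hv' t ht).continuousAt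
  -- key: v stays negative
  have key : ∀ t ≥ (0 : ℝ), v t < 0 := by
    by_contra hcon
    push_neg at hcon
    obtain ⟨t₁, ht₁, hvt₁⟩ := hcon
    set S : Set ℝ := {t : ℝ | 0 ≤ t ∧ t ≤ t₁ ∧ v t = 0} with hS
    have hconIcc : ∀ a b : ℝ, 0 ≤ a → ContinuousOn v (Icc a b) :=
      fun a b ha s hs => (hcont s (ha.trans hs.1)).continuousWithinAt
    have hSne : S.Nonempty := by
      obtain ⟨c, hc, hvc⟩ := intermediate_value_Icc ht₁ (hconIcc 0 t₁ le_rfl)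
        (Set.mem_Icc.mpr ⟨hv0.le, hvt₁⟩)
      exact ⟨c, hc.1, hc.2, hvc⟩
    have hSbdd : BddBelow S := ⟨0, fun s hs => hs.1⟩
    set T := sInf S with hT
    have hT0 : 0 ≤ T := le_csInf hSne (fun s hs => hs.1)
    have hTt₁ : T ≤ t₁ := by
      obtain ⟨s, hs⟩ := hSne
      exact (csInf_le hSbdd hs).trans hs.2.1
    have hTS : T ∈ S := by
      have hSclosed : IsClosed S := by
        have : S = Icc 0 t₁ ∩ v ⁻¹' {0} := by
          ext s; simp [hS, Set.mem_Icc, and_assoc]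
        rw [this]
        exact (hconIcc 0 t₁ le_rfl).preimage_isClosed_of_isClosed isClosed_Icc isClosed_singleton
      exact hSclosed.csInf_mem hSne hSbdd
    have hvT : v T = 0 := hTS.2.2
    have hTpos : 0 < T := by
      rcases eq_or_lt_of_le hT0 with h | h
      · exact absurd hvT (by rw [← h]; exact hv0.ne)
      · exact h
    -- v < 0 on [0, T)
    have hneg : ∀ s, 0 ≤ s → s < T → v s < 0 := by
      intro s hs hsT
      by_contra hvs
      push_neg at hvs
      obtain ⟨c, hc, hvc⟩ := intermediate_value_Icc hs (hconIcc 0 s le_rfl)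
        (Set.mem_Icc.mpr ⟨hv0.le, hvs⟩)
      have hcS : c ∈ S := ⟨hc.1, (hc.2.trans hsT.le).trans hTt₁, hvc⟩
      exact absurd (csInf_le hSbdd hcS) (not_le.mpr (lt_of_le_of_lt hc.2 hsT))
    set u : ℝ → ℝ := fun s => -(v s)⁻¹ with hu
    have hu' : ∀ s, 0 ≤ s → s < T → HasDerivAt u μ s := by
      intro s hs hsT
      have hne : v s ≠ 0 := (hneg s hs hsT).ne
      have h := ((hv' s hs).inv hne).neg
      have : -(-(μ * v s ^ 2) / v s ^ 2) = μ := by field_simp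
      rwa [this] at h
    -- u s = u 0 + μ s on [0, T)
    have hg : ∀ x : ℝ, HasDerivAt (fun s : ℝ => u 0 + μ * s) μ x := by
      intro x
      simpa using ((hasDerivAt_id x).const_mul μ).const_add (u 0)
    have hlin : ∀ s, 0 ≤ s → s < T → u s = u 0 + μ * s := by
      intro s hs hsT
      have := eq_of_has_deriv_right_eq (f := u) (g := fun s => u 0 + μ * s)
        (f' := fun _ => μ) (a := 0) (b := s)
        (fun x hx => (hu' x hx.1 (lt_of_lt_of_le hx.2 hsT.le)).hasDerivWithinAt)
        (fun x _ => (hg x).hasDerivWithinAt)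
        (fun x hx => (hu' x hx.1 (lt_of_le_of_lt hx.2 hsT)).continuousAt.continuousWithinAt)
        ((continuous_const.add (continuous_const.mul continuous_id)).continuousOn)
        (by simp)
      exact this s ⟨hs, le_rfl⟩
    set C := u 0 + μ * T with hC
    have huC : ∀ s, 0 ≤ s → s < T → u s ≤ C := by
      intro s hs hsT
      rw [hlin s hs hsT]
      have : μ * s ≤ μ * T := by nlinarith
      linarith
    have hupos : ∀ s, 0 ≤ s → s < T → 0 < u s := by
      intro s hs hsT
      have h := hneg s hs hsT
      simp only [hu]
      exact neg_pos.mpr (inv_lt_zero.mpr h)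
    have hCpos : 0 < C := by
      have h1 := hupos 0 le_rfl hTpos
      have h2 : 0 < μ * T := by positivity
      simp only [hC]
      linarith
    have hvle : ∀ s, 0 ≤ s → s < T → v s ≤ -C⁻¹ := by
      intro s hs hsT
      have h1 := hupos s hs hsT
      have h2 := huC s hs hsT
      have hvs := hneg s hs hsT
      have hne : v s ≠ 0 := hvs.ne
      have hmul : v s * u s = -1 := by
        simp only [hu]
        field_simp
      have h4 : v s * C ≤ -1 := by nlinarith
      have h5 : v s ≤ (-1) / C := (le_div_iff₀ hCpos).mpr h4
      simpa [neg_div, one_div] using h5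
    -- pass to the limit s → T⁻
    have hlim : Tendsto v (nhdsWithin T (Iio T)) (nhds (v T)) :=
      (hcont T hT0).continuousWithinAt
    have hev : ∀ᶠ s in nhdsWithin T (Iio T), v s ≤ -C⁻¹ := by
      filter_upwards [Ioo_mem_nhdsLT_of_mem (Set.mem_Ioc.mpr ⟨(by linarith : (0:ℝ) < T), le_rfl⟩)]
        with s hs
      exact hvle s hs.1.le hs.2
    have : v T ≤ -C⁻¹ := le_of_tendsto hlim hev
    rw [hvT] at this
    have : (0:ℝ) < C⁻¹ := by positivity
    linarith
  -- explicit formula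
  set u : ℝ → ℝ := fun s => -(v s)⁻¹ with hu
  have hu' : ∀ s ≥ (0:ℝ), HasDerivAt u μ s := by
    intro s hs
    have hne : v s ≠ 0 := (key s hs).ne
    have h := ((hv' s hs).inv hne).neg
    have : -(-(μ * v s ^ 2) / v s ^ 2) = μ := by field_simp
    rwa [this] at h
  have hg : ∀ x : ℝ, HasDerivAt (fun s : ℝ => u 0 + μ * s) μ x := by
    intro x
    simpa using ((hasDerivAt_id x).const_mul μ).const_add (u 0)
  have hlin : ∀ s ≥ (0:ℝ), u s = u 0 + μ * s := by
    intro s hs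
    have := eq_of_has_deriv_right_eq (f := u) (g := fun s => u 0 + μ * s)
      (f' := fun _ => μ) (a := 0) (b := s)
      (fun x hx => (hu' x hx.1).hasDerivWithinAt)
      (fun x _ => (hg x).hasDerivWithinAt)
      (fun x hx => (hu' x hx.1).continuousAt.continuousWithinAt)
      ((continuous_const.add (continuous_const.mul continuous_id)).continuousOn)
      (by simp)
    exact this s ⟨hs, le_rfl⟩
  have hu0pos : 0 < u 0 := by
    have h := key 0 le_rfl
    simp only [hu]
    exact neg_pos.mpr (inv_lt_zero.mpr h)
  have hvfor : ∀ s ≥ (0:ℝ), v s = -(u 0 + μ * s)⁻¹ := by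
    intro s hs
    have h : -(v s)⁻¹ = u 0 + μ * s := hlin s hs
    rw [← h, inv_neg, neg_neg, inv_inv]
  refine ⟨?_, fun t ht => sub_neg.mp (key t ht), ?_⟩
  · -- strict mono
    apply strictMonoOn_of_deriv_pos (convex_Ici 0)
    · exact fun t ht => (hy t ht).continuousAt.continuousWithinAt
    · intro t ht
      rw [interior_Ici] at ht
      rw [(hy t ht.le).deriv, hsq (y t)]
      have hne : y t - A ≠ 0 := ne_of_lt (key t ht.le)
      positivity
  · -- convergence
    have hvt : Tendsto v atTop (nhds 0) := by
      have h1 : Tendsto (fun s : ℝ => u 0 + μ * s) atTop atTop :=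
        tendsto_atTop_add_const_left _ _ (tendsto_id.const_mul_atTop hμ)
      have h2 : Tendsto (fun s : ℝ => -(u 0 + μ * s)⁻¹) atTop (nhds (-0)) :=
        (h1.inv_tendsto_atTop).neg
      rw [neg_zero] at h2
      apply h2.congr'
      filter_upwards [eventually_ge_atTop (0:ℝ)] with s hs
      exact (hvfor s hs).symm
    have h2 : Tendsto (fun t => v t + A) atTop (nhds (0 + A)) := hvt.add_const A
    rw [zero_add] at h2
    have heq : (fun t => v t + A) = y := by funext t; simp [hvdef]
    rwa [heq] at h2
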